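/- Soundness and principality of simplification: if the simplification judgment Q ⊢ C ⤳ Q'; θ holds (derived by rules S-Fun, S-Data, S-Uni, S-Triv, S-Entail, S-Rem), then (Q', θ) is a guess-free solution for (Q, C); that is, Q ∧ Q' ⊨ Cθ, dom(θ) is disjoint from the free unification variables of Q and of Q', and Q ∧ C ⊨ Q' ∧ ⋀_{π∈dom(θ)}(π = θ(π)) ∧ ⋀_{α∈dom(θ)}(α ∼ θ(α)). -/

import Mathlib

/-- The multiplicity set {1, ω}. -/
inductive M where
  | one : M
  | omega : M
deriving DecidableEq, Repr

/-- Multiplication: 1 is identity, ω is absorbing. -/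
def M.mul : M → M → M
  | .one, m => m
  | .omega, _ => .omega

/-- The order ≤: reflexive closure of 1 ≤ ω. -/
def M.le (m₁ m₂ : M) : Prop := m₁ = m₂ ∨ (m₁ = .one ∧ m₂ = .omega)

/-- Multiplicity atoms: rigid variables, unification variables, constants. -/
inductive MAtom where
  | rvar : ℕ → MAtom
  | uvar : ℕ → MAtom
  | const : M → MAtom
deriving DecidableEq

/-- Types: rigid type variables, unification type variables, datatypes, and
multiplicity-annotated arrows. -/
inductive Ty where
  | rvar : ℕ → Ty
  | uvar : ℕ → Ty
  | data : ℕ → List MAtom → List Ty → Ty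
  | arr : Ty → MAtom → Ty → Ty

/-- A valuation of multiplicity variables (rigid and unification). -/
structure Val where
  r : ℕ → M
  u : ℕ → M

def evalMAtom (v : Val) : MAtom → M
  | .rvar n => v.r n
  | .uvar n => v.u n
  | .const m => m

def evalMProd (v : Val) (l : List MAtom) : M :=
  (l.map (evalMAtom v)).foldr M.mul M.one

/-- Evaluate all multiplicity atoms in a type under a valuation. -/
def evalTy (v : Val) : Ty → Ty
  | .rvar a => .rvar a
  | .uvar a => .uvar a
  | .arr σ μ τ => .arr (evalTy v σ) (.const (evalMAtom v μ)) (evalTy v τ)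
  | .data d ms ts => .data d (ms.map (fun a => .const (evalMAtom v a)))
      (ts.attach.map (fun ⟨t, _⟩ => evalTy v t))
decreasing_by
  all_goals simp_wf
  all_goals first
    | omega
    | (have := List.sizeOf_lt_of_mem ‹t ∈ ts›; omega)

/-- A multiplicity predicate μ ≤ ∏ᵢ νᵢ. -/
abbrev MIneq := MAtom × List MAtom

/-- Wanted constraints: multiplicity inequalities and type equalities. -/
inductive Pred19 where
  | ineq : MAtom → List MAtom → Pred19
  | tyeq : Ty → Ty → Pred19

/-- A multiplicity-only constraint Q. -/
abbrev QC := List MIneq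

/-- A general constraint C. -/
abbrev C19 := List Pred19

def MIneq.holds (v : Val) (p : MIneq) : Prop :=
  (evalMAtom v p.1).le (evalMProd v p.2)

def Pred19.holds (v : Val) : Pred19 → Prop
  | .ineq μ l => (evalMAtom v μ).le (evalMProd v l)
  | .tyeq τ τ' => evalTy v τ = evalTy v τ'

def QHolds (Q : QC) (v : Val) : Prop := ∀ p ∈ Q, p.holds v
def CHolds (C : C19) (v : Val) : Prop := ∀ p ∈ C, p.holds v

/-- A substitution for unification variables (of both sorts). -/
structure Subst19 where
  m : ℕ → Option MAtom
  t : ℕ → Option Ty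

def idSub : Subst19 := ⟨fun _ => none, fun _ => none⟩

def appMAtom (s : Subst19) : MAtom → MAtom
  | .uvar π => (s.m π).getD (.uvar π)
  | a => a

def appTy (s : Subst19) : Ty → Ty
  | .rvar a => .rvar a
  | .uvar α => (s.t α).getD (.uvar α)
  | .arr σ μ τ => .arr (appTy s σ) (appMAtom s μ) (appTy s τ)
  | .data d ms ts => .data d (ms.map (appMAtom s))
      (ts.attach.map (fun ⟨t, _⟩ => appTy s t))
decreasing_by
  all_goals simp_wf
  all_goals first
    | omega
    | (have := List.sizeOf_lt_of_mem ‹t ∈ ts›; omega)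

def appPred (s : Subst19) : Pred19 → Pred19
  | .ineq μ l => .ineq (appMAtom s μ) (l.map (appMAtom s))
  | .tyeq τ τ' => .tyeq (appTy s τ) (appTy s τ')

def appC (s : Subst19) (C : C19) : C19 := C.map (appPred s)

/-- The substitution [α ↦ τ] on type unification variables. -/
def singleT (α : ℕ) (τ : Ty) : Subst19 :=
  ⟨fun _ => none, fun β => if β = α then some τ else none⟩

/-- Composition θ ∘ θ': apply θ' first, then θ. -/
def compose (s s' : Subst19) : Subst19 :=
  ⟨fun π => match s'.m π with
     | some a => some (appMAtom s a)
     | none => s.m π,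
   fun α => match s'.t α with
     | some τ => some (appTy s τ)
     | none => s.t α⟩

/-- Whether a type mentions a type unification variable. -/
def tyMentionsU (α : ℕ) : Ty → Prop
  | .rvar _ => False
  | .uvar β => β = α
  | .arr σ _ τ => tyMentionsU α σ ∨ tyMentionsU α τ
  | .data _ _ ts => ∃ t ∈ ts.attach, tyMentionsU α t.val
decreasing_by
  all_goals simp_wf
  all_goals first
    | omega
    | (have := List.sizeOf_lt_of_mem t.2; omega)

/-- Whether a multiplicity-only constraint mentions a multiplicity
unification variable. -/
def qMentionsMu (Q : QC) (π : ℕ) : Prop :=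
  ∃ p ∈ Q, p.1 = .uvar π ∨ .uvar π ∈ p.2

def isIneq : Pred19 → Prop
  | .ineq _ _ => True
  | .tyeq _ _ => False

def ineqsOf (C : C19) : C19 := C.filter (fun p => match p with | .ineq _ _ => true | _ => false)

def toQC (C : C19) : QC :=
  C.filterMap (fun p => match p with | .ineq μ l => some (μ, l) | _ => none)

/-- The simplification judgment Q ⊢ C ⤳ Q'; θ, given by the rules S-Fun,
S-Data, S-Uni, S-Triv, S-Entail, S-Rem, working modulo commutativity and
associativity of ∧ and commutativity of ∼. -/
inductive Simp : QC → C19 → QC → Subst19 → Prop where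
  | perm {Q C C' Q' s} : C.Perm C' → Simp Q C' Q' s → Simp Q C Q' s
  | symm {Q τ τ' C Q' s} :
      Simp Q (.tyeq τ' τ :: C) Q' s → Simp Q (.tyeq τ τ' :: C) Q' s
  | sFun {Q σ μ τ σ' μ' τ' C Q' s} :
      Simp Q (.tyeq σ σ' :: .ineq μ [μ'] :: .ineq μ' [μ] :: .tyeq τ τ' :: C) Q' s →
      Simp Q (.tyeq (.arr σ μ τ) (.arr σ' μ' τ') :: C) Q' s
  | sData {Q d ms ts ms' ts' C Q' s} :
      ms.length = ms'.length → ts.length = ts'.length →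
      Simp Q ((List.zipWith (fun a b => Pred19.ineq a [b]) ms ms') ++
              (List.zipWith (fun a b => Pred19.ineq b [a]) ms ms') ++
              (List.zipWith Pred19.tyeq ts ts') ++ C) Q' s →
      Simp Q (.tyeq (.data d ms ts) (.data d ms' ts') :: C) Q' s
  | sUni {Q α τ C Q' s} :
      ¬ tyMentionsU α τ →
      Simp Q (appC (singleT α τ) C) Q' s →
      Simp Q (.tyeq (.uvar α) τ :: C) Q' (compose s (singleT α τ))
  | sTriv {Q τ C Q' s} : Simp Q C Q' s → Simp Q (.tyeq τ τ :: C) Q' s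
  | sEntail {Q μ l C Q' s} :
      (∀ v : Val, QHolds Q v → CHolds (ineqsOf C) v → (Pred19.ineq μ l).holds v) →
      Simp Q C Q' s →
      Simp Q (.ineq μ l :: C) Q' s
  | sRem {Q Qr} : (∀ p ∈ Qr, isIneq p) → Simp Q Qr (toQC Qr) idSub

-- helpers
lemma M.le_refl (a : M) : a.le a := Or.inl rfl
lemma M.le_antisymm {a b : M} (h : a.le b) (h' : b.le a) : a = b := by
  cases a <;> cases b <;> simp_all [M.le]
lemma M.mul_one (a : M) : a.mul .one = a := by cases a <;> rfl
lemma evalMProd_single (v : Val) (a : MAtom) : evalMProd v [a] = evalMAtom v a := by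
  simp [evalMProd, M.mul_one]

lemma evalTy_data (v : Val) (d : ℕ) (ms : List MAtom) (ts : List Ty) :
    evalTy v (.data d ms ts) = .data d (ms.map (fun a => .const (evalMAtom v a))) (ts.map (evalTy v)) := by
  rw [evalTy]; simp

lemma appTy_data (s : Subst19) (d : ℕ) (ms : List MAtom) (ts : List Ty) :
    appTy s (.data d ms ts) = .data d (ms.map (appMAtom s)) (ts.map (appTy s)) := by
  rw [appTy]; simp

lemma zipWith_eq_map_zip {α β γ} (f : α → β → γ) (l : List α) (l' : List β) :
    List.zipWith f l l' = (l.zip l').map (fun p => f p.1 p.2) := by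
  induction l generalizing l' with
  | nil => simp
  | cons a l ih => cases l' <;> simp [ih]

lemma map_eq_iff_zip {α β γ} (f : α → γ) (g : β → γ) :
    ∀ (l : List α) (l' : List β), l.length = l'.length →
    (l.map f = l'.map g ↔ ∀ ab ∈ l.zip l', f ab.1 = g ab.2) := by
  intro l
  induction l with
  | nil => intro l' h; cases l' <;> simp_all
  | cons a l ih =>
    intro l' h
    cases l' with
    | nil => simp at h
    | cons b l' => simp_all [ih l' (by simpa using h)]

lemma appMAtom_comp (s s' : Subst19) (a : MAtom) :
    appMAtom (compose s s') a = appMAtom s (appMAtom s' a) := by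
  cases a <;> simp [appMAtom, compose]
  case uvar π => cases h : s'.m π <;> simp [appMAtom, h]

lemma appTy_comp (s s' : Subst19) (τ : Ty) :
    appTy (compose s s') τ = appTy s (appTy s' τ) := by
  induction τ using appTy.induct with
  | case1 a => simp [appTy]
  | case2 α =>
    simp only [appTy, compose]
    cases h : s'.t α <;> simp [appTy, h]
  | case3 σ μ τ ih1 ih2 => simp [appTy, ih1, ih2, appMAtom_comp]
  | case4 d ms ts ih =>
    simp only [appTy_data, List.map_map]
    rw [List.map_congr_left (fun a (_ : a ∈ ms) => appMAtom_comp s s' a),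
        List.map_congr_left (fun t ht => ih t ht)]
    rfl

lemma appPred_comp (s s' : Subst19) (p : Pred19) :
    appPred (compose s s') p = appPred s (appPred s' p) := by
  cases p <;> simp [appPred, appTy_comp, appMAtom_comp, List.map_map, Function.comp_def]

lemma appC_comp (s s' : Subst19) (C : C19) :
    appC (compose s s') C = appC s (appC s' C) := by
  simp only [appC, List.map_map]
  exact List.map_congr_left fun p _ => appPred_comp s s' p

lemma appMAtom_singleT (α : ℕ) (τ : Ty) (a : MAtom) : appMAtom (singleT α τ) a = a := by
  cases a <;> rfl

lemma appTy_singleT_uvar (α : ℕ) (τ : Ty) : appTy (singleT α τ) (.uvar α) = τ := by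
  simp [appTy, singleT]

lemma appTy_singleT_not_mentions (α : ℕ) (τ0 : Ty) :
    ∀ τ, ¬ tyMentionsU α τ → appTy (singleT α τ0) τ = τ := by
  intro τ
  induction τ using appTy.induct with
  | case1 a => intro _; rw [appTy]
  | case2 β =>
    intro h
    rw [tyMentionsU] at h
    simp [appTy, singleT, h]
  | case3 σ μ τ ih1 ih2 =>
    intro h
    rw [tyMentionsU] at h
    push_neg at h
    simp [appTy, ih1 h.1, ih2 h.2, appMAtom_singleT]
  | case4 d ms ts ih =>
    intro h
    rw [tyMentionsU] at h
    push_neg at h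
    simp only [appTy_data]
    rw [List.map_congr_left (fun a (_ : a ∈ ms) => appMAtom_singleT α τ0 a),
        List.map_congr_left (fun t ht => ih t ht (by simpa using h ⟨t, ht⟩ (by simp)))]
    simp

-- semantic: substitution preserved by eval under equation hypotheses
lemma evalMAtom_app {v : Val} {s : Subst19}
    (hm : ∀ π a, s.m π = some a → evalMAtom v (.uvar π) = evalMAtom v a)
    (a : MAtom) : evalMAtom v (appMAtom s a) = evalMAtom v a := by
  cases a <;> simp [appMAtom]
  case uvar π =>
    cases h : s.m π with
    | none => simp
    | some b => simpa using (hm π b h).symm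

lemma evalMProd_app {v : Val} {s : Subst19}
    (hm : ∀ π a, s.m π = some a → evalMAtom v (.uvar π) = evalMAtom v a)
    (l : List MAtom) : evalMProd v (l.map (appMAtom s)) = evalMProd v l := by
  simp only [evalMProd, List.map_map]
  congr 1
  exact List.map_congr_left fun a _ => evalMAtom_app hm a

lemma evalTy_app {v : Val} {s : Subst19}
    (hm : ∀ π a, s.m π = some a → evalMAtom v (.uvar π) = evalMAtom v a)
    (ht : ∀ α τ, s.t α = some τ → evalTy v (.uvar α) = evalTy v τ) :
    ∀ τ, evalTy v (appTy s τ) = evalTy v τ := by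
  intro τ
  induction τ using appTy.induct with
  | case1 a => rw [appTy]
  | case2 α =>
    cases h : s.t α with
    | none => simp [appTy, h]
    | some τ0 => simpa [appTy, h] using (ht α τ0 h).symm
  | case3 σ μ τ ih1 ih2 => simp [appTy, evalTy, ih1, ih2, evalMAtom_app hm]
  | case4 d ms ts ih =>
    simp only [appTy_data, evalTy_data, List.map_map]
    have h1 : List.map ((fun a => MAtom.const (evalMAtom v a)) ∘ appMAtom s) ms
        = List.map (fun a => MAtom.const (evalMAtom v a)) ms :=
      List.map_congr_left fun a _ => by simp [evalMAtom_app hm a]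
    have h2 : List.map (evalTy v ∘ appTy s) ts = List.map (evalTy v) ts :=
      List.map_congr_left fun t ht' => ih t ht'
    rw [h1, h2]

lemma holds_appPred {v : Val} {s : Subst19}
    (hm : ∀ π a, s.m π = some a → evalMAtom v (.uvar π) = evalMAtom v a)
    (ht : ∀ α τ, s.t α = some τ → evalTy v (.uvar α) = evalTy v τ)
    (p : Pred19) : (appPred s p).holds v ↔ p.holds v := by
  cases p with
  | ineq μ l => simp [appPred, Pred19.holds, evalMAtom_app hm, evalMProd_app hm]
  | tyeq τ τ' => simp [appPred, Pred19.holds, evalTy_app hm ht]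

lemma appMAtom_mnone {s : Subst19} (h : ∀ π, s.m π = none) (a : MAtom) :
    appMAtom s a = a := by
  cases a <;> simp [appMAtom, h]

lemma holds_arr (v : Val) (σ τ σ' τ' : Ty) (μ μ' : MAtom) :
    (Pred19.tyeq (.arr σ μ τ) (.arr σ' μ' τ')).holds v ↔
    ((Pred19.tyeq σ σ').holds v ∧ (Pred19.ineq μ [μ']).holds v ∧
     (Pred19.ineq μ' [μ]).holds v ∧ (Pred19.tyeq τ τ').holds v) := by
  simp only [Pred19.holds, evalTy, Ty.arr.injEq, MAtom.const.injEq, evalMProd_single]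
  constructor
  · rintro ⟨h1, h2, h3⟩; exact ⟨h1, h2 ▸ M.le_refl _, h2 ▸ M.le_refl _, h3⟩
  · rintro ⟨h1, h2, h3, h4⟩; exact ⟨h1, M.le_antisymm h2 h3, h4⟩

lemma holds_data (v : Val) (d : ℕ) {ms ms' : List MAtom} {ts ts' : List Ty}
    (hm : ms.length = ms'.length) (ht : ts.length = ts'.length) :
    (Pred19.tyeq (.data d ms ts) (.data d ms' ts')).holds v ↔
    (CHolds (List.zipWith (fun a b => Pred19.ineq a [b]) ms ms') v ∧
     CHolds (List.zipWith (fun a b => Pred19.ineq b [a]) ms ms') v ∧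
     CHolds (List.zipWith Pred19.tyeq ts ts') v) := by
  simp only [Pred19.holds, evalTy_data, Ty.data.injEq, CHolds, zipWith_eq_map_zip,
    List.forall_mem_map, evalMProd_single, true_and]
  rw [map_eq_iff_zip _ _ ms ms' hm, map_eq_iff_zip _ _ ts ts' ht]
  simp only [MAtom.const.injEq]
  constructor
  · rintro ⟨h1, h2⟩
    exact ⟨fun ab hab => (h1 ab hab) ▸ M.le_refl _,
           fun ab hab => (h1 ab hab) ▸ M.le_refl _,
           fun ab hab => h2 ab hab⟩
  · rintro ⟨h1, h2, h3⟩
    exact ⟨fun ab hab => M.le_antisymm (h1 ab hab) (h2 ab hab), fun ab hab => h3 ab hab⟩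

lemma simp_m_none {Q C Q' s} (h : Simp Q C Q' s) : ∀ π, s.m π = none := by
  induction h with
  | perm _ _ ih => exact ih
  | symm _ ih => exact ih
  | sFun _ ih => exact ih
  | sData _ _ _ ih => exact ih
  | sUni _ _ ih => intro π; simp [compose, singleT, ih π]
  | sTriv _ ih => exact ih
  | sEntail _ _ ih => exact ih
  | sRem _ => intro π; rfl

lemma CHolds_cons {p : Pred19} {C : C19} {v : Val} :
    CHolds (p :: C) v ↔ p.holds v ∧ CHolds C v := List.forall_mem_cons

lemma CHolds_append {C C' : C19} {v : Val} :
    CHolds (C ++ C') v ↔ CHolds C v ∧ CHolds C' v := List.forall_mem_append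

lemma appC_cons (s : Subst19) (p : Pred19) (C : C19) :
    appC s (p :: C) = appPred s p :: appC s C := rfl

lemma appMAtom_id (a : MAtom) : appMAtom idSub a = a := by
  cases a <;> simp [appMAtom, idSub]

lemma appTy_id (τ : Ty) : appTy idSub τ = τ := by
  induction τ using appTy.induct with
  | case1 a => rw [appTy]
  | case2 α => rw [appTy]; rfl
  | case3 σ μ τ ih1 ih2 =>
    rw [appTy]; rw [ih1, ih2, appMAtom_id]
  | case4 d ms ts ih =>
    rw [appTy_data]
    rw [List.map_congr_left (fun (a : MAtom) (_ : a ∈ ms) => appMAtom_id a),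
        List.map_congr_left ih]
    simp

lemma appPred_id (p : Pred19) : appPred idSub p = p := by
  cases p with
  | ineq μ l =>
    simp only [appPred]
    rw [List.map_congr_left (fun (a : MAtom) (_ : a ∈ l) => appMAtom_id a)]
    simp [appMAtom_id]

  | tyeq τ τ' => simp [appPred, appTy_id]

lemma appC_id (C : C19) : appC idSub C = C := by
  simp only [appC]
  rw [List.map_congr_left (fun p _ => appPred_id p)]; simp

lemma appC_zip_ineq1 (s : Subst19) (ms ms' : List MAtom) :
    appC s (List.zipWith (fun a b => Pred19.ineq a [b]) ms ms') =
    List.zipWith (fun a b => Pred19.ineq a [b]) (ms.map (appMAtom s)) (ms'.map (appMAtom s)) := by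
  simp [appC, zipWith_eq_map_zip, List.zip_map, List.map_map, appPred, Function.comp_def]

lemma appC_zip_ineq2 (s : Subst19) (ms ms' : List MAtom) :
    appC s (List.zipWith (fun a b => Pred19.ineq b [a]) ms ms') =
    List.zipWith (fun a b => Pred19.ineq b [a]) (ms.map (appMAtom s)) (ms'.map (appMAtom s)) := by
  simp [appC, zipWith_eq_map_zip, List.zip_map, List.map_map, appPred, Function.comp_def]

lemma appC_zip_tyeq (s : Subst19) (ts ts' : List Ty) :
    appC s (List.zipWith Pred19.tyeq ts ts') =
    List.zipWith Pred19.tyeq (ts.map (appTy s)) (ts'.map (appTy s)) := by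
  simp [appC, zipWith_eq_map_zip, List.zip_map, List.map_map, appPred, Function.comp_def]

theorem stmt19 : ∀ (Q : QC) (C : C19) (Q' : QC) (s : Subst19),
    Simp Q C Q' s →
    (∀ v : Val, QHolds Q v → QHolds Q' v → CHolds (appC s C) v) ∧
    (∀ π, s.m π ≠ none → ¬ qMentionsMu Q π ∧ ¬ qMentionsMu Q' π) ∧
    (∀ v : Val, QHolds Q v → CHolds C v →
      QHolds Q' v ∧
      (∀ π a, s.m π = some a → evalMAtom v (.uvar π) = evalMAtom v a) ∧
      (∀ α τ, s.t α = some τ → evalTy v (.uvar α) = evalTy v τ)) := by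
  intro Q C Q' s h
  induction h with
  | @perm C C' Q' s hp hsimp ih =>
    obtain ⟨ih1, ih2, ih3⟩ := ih
    refine ⟨?_, ih2, ?_⟩
    · intro v hQ hQ' p hpmem
      exact ih1 v hQ hQ' p ((hp.map (appPred s)).mem_iff.mp hpmem)
    · intro v hQ hC
      exact ih3 v hQ (fun p hp' => hC p (hp.mem_iff.mpr hp'))
  | @symm τ τ' C Q' s hsimp ih =>
    obtain ⟨ih1, ih2, ih3⟩ := ih
    refine ⟨?_, ih2, ?_⟩
    · intro v hQ hQ'
      have h1 := ih1 v hQ hQ'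
      rw [appC_cons, CHolds_cons] at h1 ⊢
      exact ⟨(h1.1 : evalTy v _ = evalTy v _).symm, h1.2⟩
    · intro v hQ hC
      rw [CHolds_cons] at hC
      exact ih3 v hQ (CHolds_cons.mpr ⟨(hC.1 : evalTy v _ = evalTy v _).symm, hC.2⟩)
  | @sFun σ μ τ σ' μ' τ' C Q' s hsimp ih =>
    obtain ⟨ih1, ih2, ih3⟩ := ih
    refine ⟨?_, ih2, ?_⟩
    · intro v hQ hQ'
      have h1 := ih1 v hQ hQ'
      rw [appC_cons, appC_cons, appC_cons, appC_cons, CHolds_cons, CHolds_cons,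
        CHolds_cons, CHolds_cons] at h1
      obtain ⟨e1, e2, e3, e4, htail⟩ := h1
      rw [appC_cons, CHolds_cons]
      refine ⟨?_, htail⟩
      show (Pred19.tyeq (appTy s (.arr σ μ τ)) (appTy s (.arr σ' μ' τ'))).holds v
      rw [appTy, appTy]
      exact (holds_arr v _ _ _ _ _ _).mpr ⟨e1, by simpa [appPred] using e2,
        by simpa [appPred] using e3, e4⟩
    · intro v hQ hC
      rw [CHolds_cons] at hC
      obtain ⟨hhead, htail⟩ := hC
      have := (holds_arr v σ τ σ' τ' μ μ').mp hhead
      exact ih3 v hQ (by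
        rw [CHolds_cons, CHolds_cons, CHolds_cons, CHolds_cons]
        exact ⟨this.1, this.2.1, this.2.2.1, this.2.2.2, htail⟩)
  | @sData d ms ts ms' ts' C Q' s hlm hlt hsimp ih =>
    obtain ⟨ih1, ih2, ih3⟩ := ih
    refine ⟨?_, ih2, ?_⟩
    · intro v hQ hQ'
      have h1 := ih1 v hQ hQ'
      simp only [appC, List.map_append] at h1
      rw [CHolds_append, CHolds_append, CHolds_append] at h1
      obtain ⟨⟨⟨z1, z2⟩, z3⟩, htail⟩ := h1
      rw [appC_cons, CHolds_cons]
      constructor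
      · show (Pred19.tyeq (appTy s (.data d ms ts)) (appTy s (.data d ms' ts'))).holds v
        rw [appTy_data, appTy_data]
        refine (holds_data v d (by simp [hlm]) (by simp [hlt])).mpr ⟨?_, ?_, ?_⟩
        · rw [← appC_zip_ineq1]; exact z1
        · rw [← appC_zip_ineq2]; exact z2
        · rw [← appC_zip_tyeq]; exact z3
      · exact htail
    · intro v hQ hC
      rw [CHolds_cons] at hC
      obtain ⟨hhead, htail⟩ := hC
      have hd := (holds_data v d hlm hlt).mp hhead
      exact ih3 v hQ (by
        rw [CHolds_append, CHolds_append, CHolds_append]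
        exact ⟨⟨⟨hd.1, hd.2.1⟩, hd.2.2⟩, htail⟩)
  | @sUni α τ C Q' s hnm hsimp ih =>
    obtain ⟨ih1, ih2, ih3⟩ := ih
    have hmn' := simp_m_none hsimp
    have hmn : ∀ π, (compose s (singleT α τ)).m π = none := by
      intro π; simp [compose, singleT, hmn' π]
    refine ⟨?_, ?_, ?_⟩
    · intro v hQ hQ'
      rw [appC_cons, CHolds_cons]
      constructor
      · show (Pred19.tyeq (appTy _ (.uvar α)) (appTy _ τ)).holds v
        rw [appTy_comp, appTy_comp, appTy_singleT_uvar, appTy_singleT_not_mentions α τ τ hnm]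
        exact rfl
      · rw [appC_comp]; exact ih1 v hQ hQ'
    · intro π hne; exact absurd (hmn π) hne
    · intro v hQ hC
      rw [CHolds_cons] at hC
      obtain ⟨hhead, htail⟩ := hC
      have hhead' : evalTy v (.uvar α) = evalTy v τ := hhead
      have hm0 : ∀ π a, (singleT α τ).m π = some a →
          evalMAtom v (.uvar π) = evalMAtom v a := by
        intro π a h; simp [singleT] at h
      have ht0 : ∀ β τ', (singleT α τ).t β = some τ' →
          evalTy v (.uvar β) = evalTy v τ' := by
        intro β τ' h
        simp only [singleT] at h
        split_ifs at h with hβ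
        cases h; rw [hβ]; exact hhead'
      have hCσ : CHolds (appC (singleT α τ) C) v := by
        intro p hp
        obtain ⟨q, hq, rfl⟩ := List.mem_map.mp hp
        exact (holds_appPred hm0 ht0 q).mpr (htail q hq)
      obtain ⟨hQ', heqm, heqt⟩ := ih3 v hQ hCσ
      refine ⟨hQ', ?_, ?_⟩
      · intro π a h
        simp only [compose, singleT] at h
        exact heqm π a h
      · intro β τ' h
        simp only [compose, singleT] at h
        by_cases hβ : β = α
        · simp only [hβ, if_pos rfl] at h
          cases h
          rw [hβ]
          exact hhead'.trans (evalTy_app heqm heqt τ).symm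
        · simp only [if_neg hβ] at h
          exact heqt β τ' h
  | @sTriv τ C Q' s hsimp ih =>
    obtain ⟨ih1, ih2, ih3⟩ := ih
    refine ⟨?_, ih2, ?_⟩
    · intro v hQ hQ'
      rw [appC_cons, CHolds_cons]
      exact ⟨(rfl : evalTy v (appTy s τ) = evalTy v (appTy s τ)), ih1 v hQ hQ'⟩
    · intro v hQ hC
      rw [CHolds_cons] at hC
      exact ih3 v hQ hC.2
  | @sEntail μ l C Q' s hent hsimp ih =>
    obtain ⟨ih1, ih2, ih3⟩ := ih
    have hmn := simp_m_none hsimp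
    refine ⟨?_, ih2, ?_⟩
    · intro v hQ hQ'
      have htail := ih1 v hQ hQ'
      rw [appC_cons, CHolds_cons]
      have hineqs : CHolds (ineqsOf C) v := by
        intro p hp
        have hpC : p ∈ C := (List.mem_filter.mp hp).1
        have hcond := (List.mem_filter.mp hp).2
        have happ := htail (appPred s p) (List.mem_map_of_mem hpC)
        cases p with
        | ineq μ0 l0 =>
          have : appPred s (.ineq μ0 l0) = .ineq μ0 l0 := by
            simp [appPred, appMAtom_mnone hmn, List.map_congr_left
              (fun (a : MAtom) (_ : a ∈ l0) => appMAtom_mnone hmn a)]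
          rwa [this] at happ
        | tyeq τ τ' => simp at hcond
      constructor
      · have hh := hent v hQ hineqs
        show (Pred19.ineq (appMAtom s μ) (l.map (appMAtom s))).holds v
        rw [appMAtom_mnone hmn, List.map_congr_left
              (fun (a : MAtom) (_ : a ∈ l) => appMAtom_mnone hmn a)]
        simpa using hh
      · exact htail
    · intro v hQ hC
      rw [CHolds_cons] at hC
      exact ih3 v hQ hC.2
  | @sRem Qr hiq =>
    refine ⟨?_, ?_, ?_⟩
    · intro v hQ hQ'
      rw [appC_id]
      intro p hp
      cases hp' : p with
      | ineq μ l =>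
        have : (μ, l) ∈ toQC Qr := by
          rw [toQC, List.mem_filterMap]
          exact ⟨p, hp, by rw [hp']⟩
        exact hQ' (μ, l) this
      | tyeq τ τ' => exact absurd (hiq p hp) (by rw [hp']; simp [isIneq])
    · intro π hne; exact absurd rfl hne
    · intro v hQ hC
      refine ⟨?_, ?_, ?_⟩
      · intro q hq
        rw [toQC, List.mem_filterMap] at hq
        obtain ⟨p, hp, hpq⟩ := hq
        cases p with
        | ineq μ0 l0 =>
          cases hpq
          exact hC _ hp
        | tyeq _ _ => simp at hpq
      · intro π a h; simp [idSub] at h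
      · intro α τ h; simp [idSub] at h
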